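/- Let T : ℕ → ℤ, n ≥ m ≥ 1, and q, d positive integers. Let ψ(i, j) = (Σ_{k=i}^{j−1} T(k)·d^(j−1−k)) mod q. Then the final rolling hash value equals the direct hash of the last window: applying the update recurrence t_{s+1} = (d·(t_s − T(s)·d^(m−1)) + T(s+m)) mod q starting from t_0 = ψ(0, m) yields t_{n−m} = ψ(n−m, n). -/
import Mathlib


theorem final_hash_eq (T : ℕ → ℤ) (n m : ℕ) (hm : 1 ≤ m) (hmn : m ≤ n)
    (q d : ℤ) (hq : 0 < q) (hd : 0 < d)
    (ψ : ℕ → ℕ → ℤ)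
    (hψ : ∀ i j, ψ i j = (∑ k ∈ Finset.Ico i j, T k * d ^ (j - 1 - k)) % q)
    (t : ℕ → ℤ)
    (ht0 : t 0 = ψ 0 m)
    (hts : ∀ s, t (s + 1) = (d * (t s - T s * d ^ (m - 1)) + T (s + m)) % q) :
    t (n - m) = ψ (n - m) n := by
  have key : ∀ s, t s = ψ s (s + m) := by
    intro s
    induction s with
    | zero => simpa using ht0
    | succ s ih =>
      rw [hts, ih, hψ, hψ]
      set A : ℤ := ∑ k ∈ Finset.Ico s (s + m), T k * d ^ (s + m - 1 - k) with hA
      have hlt : s < s + m := by omega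
      have hsplit : A = T s * d ^ (m - 1) +
          ∑ k ∈ Finset.Ico (s + 1) (s + m), T k * d ^ (s + m - 1 - k) := by
        rw [hA, Finset.sum_eq_sum_Ico_succ_bot hlt]
        have he : s + m - 1 - s = m - 1 := by omega
        rw [he]
      have hsub : A - T s * d ^ (m - 1) =
          ∑ k ∈ Finset.Ico (s + 1) (s + m), T k * d ^ (s + m - 1 - k) := by
        rw [hsplit]; ring
      have hmul : d * (A - T s * d ^ (m - 1)) + T (s + m) =
          ∑ k ∈ Finset.Ico (s + 1) (s + 1 + m), T k * d ^ (s + 1 + m - 1 - k) := by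
        have h2 : s + 1 ≤ s + m := by omega
        rw [hsub, Finset.mul_sum]
        have : s + 1 + m = (s + m) + 1 := by omega
        rw [this, Finset.sum_Ico_succ_top h2]
        congr 1
        · apply Finset.sum_congr rfl
          intro k hk
          simp only [Finset.mem_Ico] at hk
          have he : s + m + 1 - 1 - k = (s + m - 1 - k) + 1 := by omega
          rw [he, pow_succ]
          ring
        · simp
      have hmod : (d * (A % q - T s * d ^ (m - 1)) + T (s + m)) % q
          = (d * (A - T s * d ^ (m - 1)) + T (s + m)) % q := by
        have hAm : (A % q) ≡ A [ZMOD q] := Int.emod_emod_of_dvd A dvd_rfl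
        exact ((hAm.sub_right _).mul_left d).add_right _
      rw [hmod, hmul]
  have := key (n - m)
  rwa [Nat.sub_add_cancel hmn] at this
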